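/- Let ι = erf⁻¹. The elasticity ρ ↦ ρ·ι'(ρ)/ι(ρ) is strictly increasing on (0,1). -/

import Mathlib

open Real Set Filter MeasureTheory

/-- The Gaussian error function `erf z = (2/√π) ∫₀^z e^{-t²} dt`. -/
noncomputable def erf (z : ℝ) : ℝ :=
  (2 / Real.sqrt Real.pi) * ∫ t in (0:ℝ)..z, Real.exp (-t ^ 2)

/-- The inverse of the Gaussian error function. -/
noncomputable def erfInv : ℝ → ℝ := Function.invFun erf

lemma sqrt_pi_pos' : 0 < Real.sqrt Real.pi := Real.sqrt_pos.2 Real.pi_pos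

lemma hasDerivAt_erf (x : ℝ) :
    HasDerivAt erf (2 / Real.sqrt Real.pi * Real.exp (-x ^ 2)) x := by
  have hc : Continuous fun t : ℝ => Real.exp (-t ^ 2) := by continuity
  have h : HasDerivAt (fun u => ∫ t in (0:ℝ)..u, Real.exp (-t ^ 2)) (Real.exp (-x ^ 2)) x :=
    intervalIntegral.integral_hasDerivAt_right (hc.intervalIntegrable _ _)
      (hc.stronglyMeasurableAtFilter _ _) hc.continuousAt
  exact h.const_mul _

lemma differentiable_erf : Differentiable ℝ erf :=
  fun x => (hasDerivAt_erf x).differentiableAt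

lemma continuous_erf : Continuous erf := differentiable_erf.continuous

lemma strictMono_erf : StrictMono erf := by
  apply strictMono_of_deriv_pos
  intro x
  rw [(hasDerivAt_erf x).deriv]
  positivity

lemma erf_zero : erf 0 = 0 := by simp [erf]

lemma erf_pos {x : ℝ} (hx : 0 < x) : 0 < erf x := by
  have := strictMono_erf hx
  rwa [erf_zero] at this

lemma tendsto_erf_atTop : Filter.Tendsto erf Filter.atTop (nhds 1) := by
  have hI : MeasureTheory.IntegrableOn (fun t : ℝ => Real.exp (-t ^ 2)) (Set.Ioi 0) := by
    have := (integrable_exp_neg_mul_sq one_pos).integrableOn (s := Set.Ioi 0)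
    simpa using this
  have h := MeasureTheory.intervalIntegral_tendsto_integral_Ioi 0 hI tendsto_id
  have hval : ∫ t in Set.Ioi (0:ℝ), Real.exp (-t ^ 2) = Real.sqrt Real.pi / 2 := by
    have := integral_gaussian_Ioi 1
    simpa using this
  rw [hval] at h
  have h2 := h.const_mul (2 / Real.sqrt Real.pi)
  have hval2 : 2 / Real.sqrt Real.pi * (Real.sqrt Real.pi / 2) = 1 := by
    field_simp
  rw [hval2] at h2
  exact h2

lemma erf_lt_one (x : ℝ) : erf x < 1 := by
  have h1 : erf (x + 1) ≤ 1 :=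
    Monotone.ge_of_tendsto strictMono_erf.monotone tendsto_erf_atTop (x + 1)
  have h2 : erf x < erf (x + 1) := strictMono_erf (by linarith)
  linarith

lemma erf_surj {ρ : ℝ} (hρ : ρ ∈ Set.Ioo (0:ℝ) 1) : ∃ x > 0, erf x = ρ := by
  have hev : ∀ᶠ t in Filter.atTop, ρ < erf t :=
    tendsto_erf_atTop.eventually (eventually_gt_nhds hρ.2)
  obtain ⟨b, hb1, hb2⟩ := (hev.and (Filter.eventually_ge_atTop 0)).exists
  have hsub : ρ ∈ Set.Icc (erf 0) (erf b) := by
    rw [erf_zero]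
    exact ⟨hρ.1.le, hb1.le⟩
  obtain ⟨x, hx, hfx⟩ := intermediate_value_Icc hb2 continuous_erf.continuousOn hsub
  refine ⟨x, ?_, hfx⟩
  rcases lt_or_eq_of_le hx.1 with h | h
  · exact h
  · exfalso; rw [← h, erf_zero] at hfx; exact hρ.1.ne hfx

lemma erfInv_erf (x : ℝ) : erfInv (erf x) = x :=
  Function.leftInverse_invFun strictMono_erf.injective x

lemma erf_erfInv {ρ : ℝ} (hρ : ρ ∈ Set.Ioo (0:ℝ) 1) : erf (erfInv ρ) = ρ := by
  obtain ⟨x, _, hfx⟩ := erf_surj hρ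
  rw [← hfx, erfInv_erf]

lemma erfInv_pos {ρ : ℝ} (hρ : ρ ∈ Set.Ioo (0:ℝ) 1) : 0 < erfInv ρ := by
  by_contra h
  push_neg at h
  have := strictMono_erf.monotone h
  rw [erf_erfInv hρ, erf_zero] at this
  exact absurd this (not_le.2 hρ.1)

lemma erfInv_lt_erfInv {a b : ℝ} (ha : a ∈ Set.Ioo (0:ℝ) 1) (hb : b ∈ Set.Ioo (0:ℝ) 1)
    (hab : a < b) : erfInv a < erfInv b := by
  apply strictMono_erf.lt_iff_lt.1
  rw [erf_erfInv ha, erf_erfInv hb]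
  exact hab

lemma continuousAt_erfInv {ρ : ℝ} (hρ : ρ ∈ Set.Ioo (0:ℝ) 1) : ContinuousAt erfInv ρ := by
  have hmono : StrictMonoOn erfInv (Set.Ioo (0:ℝ) 1) := fun a ha b hb hab =>
    erfInv_lt_erfInv ha hb hab
  apply hmono.continuousAt_of_image_mem_nhds (isOpen_Ioo.mem_nhds hρ)
  have hsub : Set.Ioi (0:ℝ) ⊆ erfInv '' Set.Ioo (0:ℝ) 1 := by
    intro y hy
    exact ⟨erf y, ⟨erf_pos hy, erf_lt_one y⟩, erfInv_erf y⟩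
  exact Filter.mem_of_superset (isOpen_Ioi.mem_nhds (erfInv_pos hρ)) hsub

lemma hasDerivAt_erfInv {ρ : ℝ} (hρ : ρ ∈ Set.Ioo (0:ℝ) 1) :
    HasDerivAt erfInv (Real.sqrt Real.pi / 2 * Real.exp ((erfInv ρ) ^ 2)) ρ := by
  have hne : 2 / Real.sqrt Real.pi * Real.exp (-(erfInv ρ) ^ 2) ≠ 0 := by positivity
  have hev : ∀ᶠ y in nhds ρ, erf (erfInv y) = y := by
    filter_upwards [isOpen_Ioo.mem_nhds hρ] with y hy using erf_erfInv hy
  have h := HasDerivAt.of_local_left_inverse (continuousAt_erfInv hρ)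
    (hasDerivAt_erf (erfInv ρ)) hne hev
  refine h.congr_deriv ?_
  symm
  rw [mul_inv, ← Real.exp_neg, neg_neg, inv_div]

/-- The elasticity expressed on the `x`-side. -/
noncomputable def gfun (x : ℝ) : ℝ :=
  Real.sqrt Real.pi / 2 * (erf x * Real.exp (x ^ 2) / x)

/-- auxiliary function whose positivity gives monotonicity of `gfun`. -/
noncomputable def hfun (x : ℝ) : ℝ :=
  2 / Real.sqrt Real.pi * x + erf x * Real.exp (x ^ 2) * (2 * x ^ 2 - 1)

lemma hasDerivAt_expsq (x : ℝ) :
    HasDerivAt (fun x : ℝ => Real.exp (x ^ 2)) (Real.exp (x ^ 2) * (2 * x)) x := by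
  have h1 : HasDerivAt (fun x : ℝ => x ^ 2) (2 * x) x := by
    simpa using hasDerivAt_pow 2 x
  exact h1.exp

lemma hasDerivAt_B (x : ℝ) :
    HasDerivAt (fun x => erf x * Real.exp (x ^ 2))
      (2 / Real.sqrt Real.pi + erf x * Real.exp (x ^ 2) * (2 * x)) x := by
  have h := (hasDerivAt_erf x).mul (hasDerivAt_expsq x)
  refine h.congr_deriv ?_
  symm
  have hx : Real.exp (-x ^ 2) * Real.exp (x ^ 2) = 1 := by
    rw [← Real.exp_add]; simp
  field_simp
  nlinarith [hx]

lemma hasDerivAt_hfun (x : ℝ) :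
    HasDerivAt hfun
      (4 * x ^ 2 / Real.sqrt Real.pi + erf x * Real.exp (x ^ 2) * (4 * x ^ 3 + 2 * x)) x := by
  have h1 : HasDerivAt (fun x : ℝ => 2 / Real.sqrt Real.pi * x) (2 / Real.sqrt Real.pi) x := by
    simpa using (hasDerivAt_id x).const_mul (2 / Real.sqrt Real.pi)
  have hC : HasDerivAt (fun x : ℝ => 2 * x ^ 2 - 1) (4 * x) x := by
    have h := ((hasDerivAt_pow 2 x).const_mul 2).sub_const 1
    refine h.congr_deriv ?_
    symm
    ring
  have h2 := (hasDerivAt_B x).mul hC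
  have h := h1.add h2
  refine h.congr_deriv ?_
  symm
  field_simp
  ring

lemma hfun_zero : hfun 0 = 0 := by simp [hfun, erf_zero]

lemma hfun_pos {x : ℝ} (hx : 0 < x) : 0 < hfun x := by
  have hmono : StrictMonoOn hfun (Set.Ici 0) := by
    apply strictMonoOn_of_deriv_pos (convex_Ici 0)
    · exact fun y _ => ((hasDerivAt_hfun y).continuousAt).continuousWithinAt
    · intro y hy
      rw [interior_Ici] at hy
      have hy' : (0:ℝ) < y := hy
      rw [(hasDerivAt_hfun y).deriv]
      have h1 : 0 < 4 * y ^ 2 / Real.sqrt Real.pi := by positivity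
      have h2 : 0 < erf y := erf_pos hy
      have h3 : 0 < 4 * y ^ 3 + 2 * y := by positivity
      have h4 : 0 < Real.exp (y ^ 2) := Real.exp_pos _
      have h5 := mul_pos (mul_pos h2 h4) h3
      linarith
  have := hmono (Set.self_mem_Ici) (Set.mem_Ici.2 hx.le) hx
  rwa [hfun_zero] at this

lemma hasDerivAt_gfun {x : ℝ} (hx : x ≠ 0) :
    HasDerivAt gfun (Real.sqrt Real.pi / 2 * (hfun x / x ^ 2)) x := by
  have hB := hasDerivAt_B x
  have hinv : HasDerivAt (fun x : ℝ => x⁻¹) (-(x ^ 2)⁻¹) x := hasDerivAt_inv hx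
  have h := ((hB.mul hinv).const_mul (Real.sqrt Real.pi / 2))
  have heq : gfun = fun y => Real.sqrt Real.pi / 2 * (erf y * Real.exp (y ^ 2) * y⁻¹) := by
    funext y; rw [gfun]; ring
  rw [heq]
  refine h.congr_deriv ?_
  symm
  rw [hfun]
  field_simp
  ring

lemma strictMonoOn_gfun : StrictMonoOn gfun (Set.Ioi (0:ℝ)) := by
  apply strictMonoOn_of_deriv_pos (convex_Ioi 0)
  · exact fun y hy => ((hasDerivAt_gfun (ne_of_gt hy)).continuousAt).continuousWithinAt
  · intro y hy
    rw [interior_Ioi] at hy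
    rw [(hasDerivAt_gfun (ne_of_gt hy)).deriv]
    have hy' : (0:ℝ) < y := hy
    have h1 := hfun_pos hy'
    have h2 := sqrt_pi_pos'
    positivity

/-- The elasticity  of the inverse error function is strictly increasing
on . -/
theorem erfInv_elasticity_strictMono :
    StrictMonoOn (fun ρ => ρ * deriv erfInv ρ / erfInv ρ) (Set.Ioo (0:ℝ) 1) := by
  have key : ∀ ρ ∈ Set.Ioo (0:ℝ) 1, ρ * deriv erfInv ρ / erfInv ρ = gfun (erfInv ρ) := by
    intro ρ hρ
    rw [(hasDerivAt_erfInv hρ).deriv, gfun, erf_erfInv hρ]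
    ring
  intro a ha b hb hab
  simp only
  rw [key a ha, key b hb]
  exact strictMonoOn_gfun (Set.mem_Ioi.2 (erfInv_pos ha)) (Set.mem_Ioi.2 (erfInv_pos hb))
    (erfInv_lt_erfInv ha hb hab)
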